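/- Let H be an N × N Hermitian matrix over ℂ, indexed by a finite set Z with |Z| ≥ 2, whose off-diagonal entries are all real and nonpositive. Fix z₀ ∈ Z and let χ be a vector with χ(z₀) = 0 and χ(z) > 0 for all z ≠ z₀. Then the second-smallest eigenvalue E_1 of H (counted with multiplicity) satisfies E_1 ≥ min over z ≠ z₀ of (Hχ)(z) / χ(z). -/

import Mathlib

open scoped ComplexOrder

open Matrix

lemma quad_bound {ι : Type*} [Fintype ι] [DecidableEq ι] (R : ι → ι → ℝ)
    (hsym : ∀ z w, R z w = R w z) (hoff : ∀ z w, z ≠ w → R z w ≤ 0)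
    (z₀ : ι) (φ : ι → ℝ) (hφ0 : φ z₀ = 0) (hφ : ∀ z, z ≠ z₀ → 0 < φ z)
    (c : ℝ) (hc : ∀ z, z ≠ z₀ → c * φ z ≤ ∑ w, R z w * φ w)
    (u : ι → ℝ) (hu : u z₀ = 0) :
    c * ∑ z, u z ^ 2 ≤ ∑ z, ∑ w, u z * R z w * u w := by
  have hφnn : ∀ z, 0 ≤ φ z := by
    intro z
    by_cases hz : z = z₀
    · simp [hz, hφ0]
    · exact (hφ z hz).le
  set f : ι → ℝ := fun z => if z = z₀ then 0 else u z / φ z with hf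
  have huf : ∀ z, u z = f z * φ z := by
    intro z
    by_cases hz : z = z₀
    · simp [hz, hu, hφ0, hf]
    · simp only [hf, if_neg hz]
      exact (div_mul_cancel₀ (u z) (hφ z hz).ne').symm
  -- rewrite quadratic form
  have step1 : ∑ z, ∑ w, u z * R z w * u w
      = ∑ z, ∑ w, R z w * φ z * φ w * (f z * f w) := by
    refine Finset.sum_congr rfl fun z _ => Finset.sum_congr rfl fun w _ => ?_
    rw [huf z, huf w]; ring
  have step2 : ∑ z, ∑ w, R z w * φ z * φ w * (f z * f w)
      = (∑ z, ∑ w, R z w * φ z * φ w * (f z ^ 2 + f w ^ 2) / 2)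
        - ∑ z, ∑ w, R z w * φ z * φ w * (f z - f w) ^ 2 / 2 := by
    rw [← Finset.sum_sub_distrib]
    refine Finset.sum_congr rfl fun z _ => ?_
    rw [← Finset.sum_sub_distrib]
    refine Finset.sum_congr rfl fun w _ => ?_
    ring
  have step3 : ∑ z, ∑ w, R z w * φ z * φ w * (f z ^ 2 + f w ^ 2) / 2
      = ∑ z, f z ^ 2 * φ z * ∑ w, R z w * φ w := by
    have split : ∑ z, ∑ w, R z w * φ z * φ w * (f z ^ 2 + f w ^ 2) / 2
        = (∑ z, ∑ w, R z w * φ z * φ w * f z ^ 2 / 2)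
          + ∑ z, ∑ w, R z w * φ z * φ w * f w ^ 2 / 2 := by
      rw [← Finset.sum_add_distrib]
      refine Finset.sum_congr rfl fun z _ => ?_
      rw [← Finset.sum_add_distrib]
      exact Finset.sum_congr rfl fun w _ => by ring
    have comm : ∑ z, ∑ w, R z w * φ z * φ w * f w ^ 2 / 2
        = ∑ z, ∑ w, R z w * φ z * φ w * f z ^ 2 / 2 := by
      rw [Finset.sum_comm]
      refine Finset.sum_congr rfl fun z _ => Finset.sum_congr rfl fun w _ => ?_
      rw [hsym w z]; ring
    rw [split, comm, ← Finset.sum_add_distrib]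
    refine Finset.sum_congr rfl fun z _ => ?_
    rw [Finset.mul_sum, ← Finset.sum_add_distrib]
    exact Finset.sum_congr rfl fun w _ => by ring
  have step4 : 0 ≤ -∑ z, ∑ w, R z w * φ z * φ w * (f z - f w) ^ 2 / 2 := by
    rw [← Finset.sum_neg_distrib]
    refine Finset.sum_nonneg fun z _ => ?_
    rw [← Finset.sum_neg_distrib]
    refine Finset.sum_nonneg fun w _ => ?_
    by_cases hzw : z = w
    · simp [hzw]
    · have h1 := hoff z w hzw
      have h2 : R z w * φ z * φ w * (f z - f w) ^ 2 / 2
          = R z w * (φ z * φ w * (f z - f w) ^ 2 / 2) := by ring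
      rw [h2]
      exact neg_nonneg.mpr (mul_nonpos_of_nonpos_of_nonneg h1
        (by have := hφnn z; have := hφnn w; positivity))
  have step5 : c * ∑ z, u z ^ 2 ≤ ∑ z, f z ^ 2 * φ z * ∑ w, R z w * φ w := by
    rw [Finset.mul_sum]
    refine Finset.sum_le_sum fun z _ => ?_
    by_cases hz : z = z₀
    · simp [hz, hu, hφ0]
    · calc c * u z ^ 2 = f z ^ 2 * φ z * (c * φ z) := by rw [huf z]; ring
        _ ≤ f z ^ 2 * φ z * ∑ w, R z w * φ w := by
            exact mul_le_mul_of_nonneg_left (hc z hz)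
              (mul_nonneg (sq_nonneg _) (hφnn z))
  rw [step1, step2, step3]
  linarith

lemma quad_bound_c {ι : Type*} [Fintype ι] [DecidableEq ι] (R : ι → ι → ℝ)
    (hsym : ∀ z w, R z w = R w z) (hoff : ∀ z w, z ≠ w → R z w ≤ 0)
    (z₀ : ι) (φ : ι → ℝ) (hφ0 : φ z₀ = 0) (hφ : ∀ z, z ≠ z₀ → 0 < φ z)
    (c : ℝ) (hc : ∀ z, z ≠ z₀ → c * φ z ≤ ∑ w, R z w * φ w)
    (quad : ∀ u : ι → ℝ, u z₀ = 0 →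
      c * ∑ z, u z ^ 2 ≤ ∑ z, ∑ w, u z * R z w * u w)
    (ψ : ι → ℂ) (hψ : ψ z₀ = 0) :
    c * ∑ z, Complex.normSq (ψ z)
      ≤ (∑ z, ∑ w, (starRingEnd ℂ) (ψ z) * (R z w : ℂ) * ψ w).re := by
  have hre : (∑ z, ∑ w, (starRingEnd ℂ) (ψ z) * (R z w : ℂ) * ψ w).re
      = (∑ z, ∑ w, (ψ z).re * R z w * (ψ w).re)
        + ∑ z, ∑ w, (ψ z).im * R z w * (ψ w).im := by
    rw [Complex.re_sum, ← Finset.sum_add_distrib]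
    refine Finset.sum_congr rfl fun z _ => ?_
    rw [Complex.re_sum, ← Finset.sum_add_distrib]
    refine Finset.sum_congr rfl fun w _ => ?_
    simp only [Complex.mul_re, Complex.mul_im, Complex.conj_re, Complex.conj_im,
      Complex.ofReal_re, Complex.ofReal_im]
    ring
  have hns : ∑ z, Complex.normSq (ψ z)
      = (∑ z, (ψ z).re ^ 2) + ∑ z, (ψ z).im ^ 2 := by
    rw [← Finset.sum_add_distrib]
    exact Finset.sum_congr rfl fun z _ => by rw [Complex.normSq_apply]; ring
  have h1 := quad (fun z => (ψ z).re) (by simp [hψ])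
  have h2 := quad (fun z => (ψ z).im) (by simp [hψ])
  rw [hre, hns]
  linarith

lemma expand_sum {ι : Type*} [Fintype ι] (v w : ι → ℂ)
    (hvv : ∑ z, (starRingEnd ℂ) (v z) * v z = 1)
    (hww : ∑ z, (starRingEnd ℂ) (w z) * w z = 1)
    (hvw : ∑ z, (starRingEnd ℂ) (v z) * w z = 0)
    (hwv : ∑ z, (starRingEnd ℂ) (w z) * v z = 0)
    (a b a' b' : ℂ) :
    ∑ z, (starRingEnd ℂ) (a * v z + b * w z) * (a' * v z + b' * w z)
      = (starRingEnd ℂ) a * a' + (starRingEnd ℂ) b * b' := by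
  have key : ∀ z, (starRingEnd ℂ) (a * v z + b * w z) * (a' * v z + b' * w z)
      = (starRingEnd ℂ) a * a' * ((starRingEnd ℂ) (v z) * v z)
        + ((starRingEnd ℂ) a * b' * ((starRingEnd ℂ) (v z) * w z)
        + ((starRingEnd ℂ) b * a' * ((starRingEnd ℂ) (w z) * v z)
        + (starRingEnd ℂ) b * b' * ((starRingEnd ℂ) (w z) * w z))) := by
    intro z; simp only [_root_.map_add, _root_.map_mul]; ring
  rw [Finset.sum_congr rfl fun z _ => key z]
  simp only [Finset.sum_add_distrib, ← Finset.mul_sum, hvv, hww, hvw, hwv]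
  ring

lemma countP_two_of_sorted (L : List ℝ) (hL : L.Pairwise (· ≤ ·)) (hlen : 2 ≤ L.length)
    (c : ℝ) (h : L.getD 1 0 < c) : 2 ≤ L.countP (fun x => decide (x < c)) := by
  match L, hL, hlen, h with
  | a :: b :: t, hL, _, h =>
    have hab : a ≤ b := (List.pairwise_cons.mp hL).1 b (by simp)
    have hb : b < c := h
    have ha : a < c := lt_of_le_of_lt hab hb
    simp [List.countP_cons, ha, hb]

/-- The eigenvalues of a Hermitian complex matrix, sorted in nondecreasing order and
counted with multiplicity. Junk value `[]` if the matrix is not Hermitian. -/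
noncomputable def sortedEigsC {ι : Type*} [Fintype ι] [DecidableEq ι]
    (A : Matrix ι ι ℂ) : List ℝ :=
  if h : A.IsHermitian then Multiset.sort (Finset.univ.val.map h.eigenvalues) (· ≤ ·)
  else []

/-- Collatz–Wielandt-type lower bound for the first excited energy: if `H` is Hermitian
with real nonpositive off-diagonal entries, `χ(z₀) = 0` and `χ(z) > 0` for `z ≠ z₀`, then
the second-smallest eigenvalue `E_1` of `H` (with multiplicity) satisfies
`E_1 ≥ min_{z ≠ z₀} (Hχ)(z)/χ(z)`. -/
theorem stmt9 {ι : Type*} [Fintype ι] [DecidableEq ι] (hcard : 2 ≤ Fintype.card ι)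
    (H : Matrix ι ι ℂ) (hH : H.IsHermitian)
    (hsto : ∀ z z', z ≠ z' → H z z' ≤ 0)
    (z₀ : ι) (χ : ι → ℂ) (hχ0 : χ z₀ = 0) (hχ : ∀ z, z ≠ z₀ → 0 < χ z) :
    (Finset.univ.erase z₀).inf'
        (by
          obtain ⟨y, hy⟩ := Fintype.exists_ne_of_one_lt_card (by omega) z₀
          exact ⟨y, Finset.mem_erase.mpr ⟨hy, Finset.mem_univ y⟩⟩)
        (fun z => ((H.mulVec χ) z / χ z).re) ≤
      (sortedEigsC H).getD 1 0 := by
  set c := (Finset.univ.erase z₀).inf'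
      (by
        obtain ⟨y, hy⟩ := Fintype.exists_ne_of_one_lt_card (by omega) z₀
        exact ⟨y, Finset.mem_erase.mpr ⟨hy, Finset.mem_univ y⟩⟩)
      (fun z => ((H.mulVec χ) z / χ z).re) with hcdef
  set R : ι → ι → ℝ := fun z w => (H z w).re with hR
  set φ : ι → ℝ := fun z => (χ z).re with hφdef
  have hre : ∀ z w, H z w = (R z w : ℂ) := by
    intro z w
    by_cases hzw : z = w
    · subst hzw
      have him : (H z z).im = 0 := by
        have h1 := hH.apply z z
        rw [RCLike.star_def] at h1
        exact Complex.conj_eq_iff_im.mp h1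
      exact Complex.ext (by simp [hR]) (by simp [hR, him])
    · have him : (H z w).im = 0 := (Complex.le_def.mp (hsto z w hzw)).2
      exact Complex.ext (by simp [hR]) (by simp [hR, him])
  have hsymR : ∀ z w, R z w = R w z := by
    intro z w
    have h1 := hH.apply z w
    rw [RCLike.star_def] at h1
    simp only [hR]
    rw [← h1, Complex.conj_re]
  have hoffR : ∀ z w, z ≠ w → R z w ≤ 0 := fun z w h =>
    (Complex.le_def.mp (hsto z w h)).1
  have hφ0 : φ z₀ = 0 := by simp [hφdef, hχ0]
  have hφpos : ∀ z, z ≠ z₀ → 0 < φ z := fun z h => (Complex.lt_def.mp (hχ z h)).1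
  have hχre : ∀ z, χ z = (φ z : ℂ) := by
    intro z
    by_cases hz : z = z₀
    · simp [hz, hχ0, hφdef]
    · have him : (χ z).im = 0 := ((Complex.lt_def.mp (hχ z hz)).2).symm
      exact Complex.ext (by simp [hφdef]) (by simp [hφdef, him])
  have hmv : ∀ z, H.mulVec χ z = ((∑ w, R z w * φ w : ℝ) : ℂ) := by
    intro z
    rw [Matrix.mulVec, dotProduct]
    push_cast
    exact Finset.sum_congr rfl fun w _ => by rw [hre z w, hχre w]
  have hc : ∀ z, z ≠ z₀ → c * φ z ≤ ∑ w, R z w * φ w := by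
    intro z hz
    have hle : c ≤ ((H.mulVec χ) z / χ z).re :=
      Finset.inf'_le _ (Finset.mem_erase.mpr ⟨hz, Finset.mem_univ z⟩)
    rw [hmv z, hχre z, ← Complex.ofReal_div, Complex.ofReal_re] at hle
    exact (le_div_iff₀ (hφpos z hz)).mp hle
  have quadR := quad_bound R hsymR hoffR z₀ φ hφ0 hφpos c hc
  have quadC := quad_bound_c R hsymR hoffR z₀ φ hφ0 hφpos c hc quadR
  -- suppose the second eigenvalue is < c
  by_contra hcon
  push_neg at hcon
  set L : List ℝ := Multiset.sort (Finset.univ.val.map hH.eigenvalues) (· ≤ ·) with hLdef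
  have hLgd : (sortedEigsC H).getD 1 0 = L.getD 1 0 := by
    rw [sortedEigsC, dif_pos hH]
  rw [hLgd] at hcon
  have hlen : 2 ≤ L.length := by
    rw [hLdef, Multiset.length_sort, Multiset.card_map]
    simpa using hcard
  have hsorted : L.Pairwise (· ≤ ·) := Multiset.pairwise_sort _ _
  have hcount : 2 ≤ L.countP (fun x => decide (x < c)) :=
    countP_two_of_sorted L hsorted hlen c hcon
  have hcard2 : 1 < (Finset.univ.filter (fun i => hH.eigenvalues i < c)).card := by
    have e2 : Multiset.countP (fun x => x < c) (Finset.univ.val.map hH.eigenvalues)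
        = L.countP (fun x => decide (x < c)) := by
      conv_lhs => rw [← Multiset.sort_eq (Finset.univ.val.map hH.eigenvalues) (· ≤ ·)]
      rfl
    have e1 : Multiset.countP (fun x => x < c) (Finset.univ.val.map hH.eigenvalues)
        = (Finset.univ.filter (fun i => hH.eigenvalues i < c)).card := by
      rw [Multiset.countP_map]
      rfl
    omega
  obtain ⟨i, hi, j, hj, hij⟩ := Finset.one_lt_card.mp hcard2
  have hli : hH.eigenvalues i < c := (Finset.mem_filter.mp hi).2
  have hlj : hH.eigenvalues j < c := (Finset.mem_filter.mp hj).2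
  set B := hH.eigenvectorBasis with hB
  have ortho : ∀ k l, ∑ z, (starRingEnd ℂ) (B k z) * B l z = if k = l then (1:ℂ) else 0 := by
    intro k l
    have h1 := orthonormal_iff_ite.mp B.orthonormal k l
    simpa [PiLp.inner_apply, RCLike.inner_apply, mul_comm] using h1
  have heig : ∀ k z, H.mulVec ⇑(B k) z = (hH.eigenvalues k : ℂ) * B k z := by
    intro k z
    have h1 := congrFun (hH.mulVec_eigenvectorBasis k) z
    simpa [Pi.smul_apply, Complex.real_smul] using h1
  obtain ⟨a, b, hab0, habne⟩ : ∃ a b : ℂ,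
      a * B i z₀ + b * B j z₀ = 0 ∧ ¬(a = 0 ∧ b = 0) := by
    by_cases h : B i z₀ = 0
    · exact ⟨1, 0, by simp [h], by simp⟩
    · exact ⟨B j z₀, -(B i z₀), by ring, fun hcon2 => h (by simpa using hcon2.2)⟩
  have hii := ortho i i
  have hjj := ortho j j
  have hij' := ortho i j
  have hji := ortho j i
  rw [if_pos rfl] at hii hjj
  rw [if_neg hij] at hij'
  rw [if_neg (Ne.symm hij)] at hji
  set ψ : ι → ℂ := fun z => a * B i z + b * B j z with hψdef
  have hψ0 : ψ z₀ = 0 := hab0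
  have hnorm : ∑ z, (starRingEnd ℂ) (ψ z) * ψ z
      = (starRingEnd ℂ) a * a + (starRingEnd ℂ) b * b :=
    expand_sum _ _ hii hjj hij' hji a b a b
  have hmulψ : ∀ z, H.mulVec ψ z
      = (a * (hH.eigenvalues i : ℂ)) * B i z + (b * (hH.eigenvalues j : ℂ)) * B j z := by
    intro z
    have hsplit : ψ = a • ⇑(B i) + b • ⇑(B j) := by
      funext y; simp [hψdef, Pi.add_apply, Pi.smul_apply, smul_eq_mul]
    rw [hsplit, Matrix.mulVec_add, Matrix.mulVec_smul, Matrix.mulVec_smul]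
    simp only [Pi.add_apply, Pi.smul_apply, smul_eq_mul]
    rw [heig i z, heig j z]
    ring
  have hen : ∑ z, ∑ w, (starRingEnd ℂ) (ψ z) * (R z w : ℂ) * ψ w
      = (starRingEnd ℂ) a * (a * (hH.eigenvalues i : ℂ))
        + (starRingEnd ℂ) b * (b * (hH.eigenvalues j : ℂ)) := by
    have h1 : ∀ z, ∑ w, (starRingEnd ℂ) (ψ z) * (R z w : ℂ) * ψ w
        = (starRingEnd ℂ) (ψ z) * H.mulVec ψ z := by
      intro z
      rw [Matrix.mulVec, dotProduct, Finset.mul_sum]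
      exact Finset.sum_congr rfl fun w _ => by rw [hre z w]; ring
    rw [Finset.sum_congr rfl fun z _ => h1 z]
    have h2 : ∀ z, (starRingEnd ℂ) (ψ z) * H.mulVec ψ z
        = (starRingEnd ℂ) (a * B i z + b * B j z)
          * ((a * (hH.eigenvalues i : ℂ)) * B i z + (b * (hH.eigenvalues j : ℂ)) * B j z) := by
      intro z
      rw [hmulψ z]
    rw [Finset.sum_congr rfl fun z _ => h2 z]
    exact expand_sum _ _ hii hjj hij' hji a b _ _
  -- take real parts and derive a contradiction
  have hnsum : ∑ z, Complex.normSq (ψ z) = Complex.normSq a + Complex.normSq b := by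
    have : ((∑ z, Complex.normSq (ψ z) : ℝ) : ℂ)
        = ((Complex.normSq a + Complex.normSq b : ℝ) : ℂ) := by
      push_cast
      rw [Finset.sum_congr rfl fun z _ => (Complex.normSq_eq_conj_mul_self (z := ψ z))]
      rw [hnorm, Complex.normSq_eq_conj_mul_self, Complex.normSq_eq_conj_mul_self]
    exact_mod_cast this
  have henre : (∑ z, ∑ w, (starRingEnd ℂ) (ψ z) * (R z w : ℂ) * ψ w).re
      = hH.eigenvalues i * Complex.normSq a + hH.eigenvalues j * Complex.normSq b := by
    rw [hen]
    have e1 : (starRingEnd ℂ) a * (a * (hH.eigenvalues i : ℂ))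
        = ((hH.eigenvalues i * Complex.normSq a : ℝ) : ℂ) := by
      push_cast
      rw [Complex.normSq_eq_conj_mul_self]
      ring
    have e2 : (starRingEnd ℂ) b * (b * (hH.eigenvalues j : ℂ))
        = ((hH.eigenvalues j * Complex.normSq b : ℝ) : ℂ) := by
      push_cast
      rw [Complex.normSq_eq_conj_mul_self]
      ring
    rw [e1, e2, ← Complex.ofReal_add, Complex.ofReal_re]
  have hkey := quadC ψ hψ0
  rw [hnsum, henre] at hkey
  have h1 : hH.eigenvalues i * Complex.normSq a ≤ c * Complex.normSq a :=
    mul_le_mul_of_nonneg_right hli.le (Complex.normSq_nonneg a)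
  have h2 : hH.eigenvalues j * Complex.normSq b ≤ c * Complex.normSq b :=
    mul_le_mul_of_nonneg_right hlj.le (Complex.normSq_nonneg b)
  rcases not_and_or.mp habne with h | h
  · have h3 : hH.eigenvalues i * Complex.normSq a < c * Complex.normSq a :=
      mul_lt_mul_of_pos_right hli (Complex.normSq_pos.mpr h)
    linarith
  · have h3 : hH.eigenvalues j * Complex.normSq b < c * Complex.normSq b :=
      mul_lt_mul_of_pos_right hlj (Complex.normSq_pos.mpr h)
    linarith
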